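/- The number of elements a : A with (f * g)(inl a) a bottom vertex (i.e. of the form inr c with c : C) is at most the minimum of the number of a : A with f (inl a) of the form inr b (b : B) and the number of c : C with g (inr c) of the form inl b (b : B). In other words, the number of through strands of the composite f * g is at most the minimum of the numbers of through strands of f and of g. -/

import Mathlib

open Sum

variable {A B C : Type*}

/-- The natural embedding of `A ⊕ B` into `A ⊕ B ⊕ C`. -/
def embAB : A ⊕ B → A ⊕ B ⊕ C
  | inl a => inl a
  | inr b => inr (inl b)

/-- The natural embedding of `B ⊕ C` into `A ⊕ B ⊕ C`. -/
def embBC : B ⊕ C → A ⊕ B ⊕ C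
  | inl b => inr (inl b)
  | inr c => inr (inr c)

/-- The natural embedding of `A ⊕ C` into `A ⊕ B ⊕ C`. -/
def embAC : A ⊕ C → A ⊕ B ⊕ C
  | inl a => inl a
  | inr c => inr (inr c)

/-- The simple graph on `A ⊕ B ⊕ C` whose edges join (the images of) `x` and `f x`
for each `x : A ⊕ B`, and (the images of) `y` and `g y` for each `y : B ⊕ C`. -/
def matchGraph (f : A ⊕ B → A ⊕ B) (g : B ⊕ C → B ⊕ C) :
    SimpleGraph (A ⊕ B ⊕ C) :=
  SimpleGraph.fromRel fun u v =>
    (∃ x : A ⊕ B, u = embAB x ∧ v = embAB (f x)) ∨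
    (∃ y : B ⊕ C, u = embBC y ∧ v = embBC (g y))

/-- `m` is the composite matching `f * g`: the (unique) fixed-point-free involution of
`A ⊕ C` such that `x` and `m x` always lie in the same connected component of `G`. -/
def IsComposite (f : A ⊕ B → A ⊕ B) (g : B ⊕ C → B ⊕ C)
    (m : A ⊕ C → A ⊕ C) : Prop :=
  m ∘ m = id ∧ (∀ x, m x ≠ x) ∧
    ∀ x : A ⊕ C, (matchGraph f g).Reachable (embAC x) (embAC (m x))

lemma reach_pair {V : Type*} {G : SimpleGraph V} {u u' : V}
    (hu : ∀ v, G.Adj u v → v = u') (hu' : ∀ v, G.Adj u' v → v = u) :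
    ∀ {s w : V}, G.Walk s w → s = u ∨ s = u' → w = u ∨ w = u' := by
  intro s w p
  induction p with
  | nil => exact id
  | cons h _ ih =>
    rintro (rfl | rfl)
    · exact ih (Or.inr (hu _ h))
    · exact ih (Or.inl (hu' _ h))

lemma embAB_eq_inl {x : A ⊕ B} {a : A} :
    embAB (C := C) x = inl a ↔ x = inl a := by
  cases x <;> simp [embAB]

lemma embBC_ne_inl {y : B ⊕ C} {a : A} : embBC y ≠ (inl a : A ⊕ B ⊕ C) := by
  cases y <;> simp [embBC]

lemma embAB_ne_inr_inr {x : A ⊕ B} {c : C} :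
    embAB x ≠ (inr (inr c) : A ⊕ B ⊕ C) := by
  cases x <;> simp [embAB]

lemma embBC_eq_inr_inr {y : B ⊕ C} {c : C} :
    embBC (A := A) y = inr (inr c) ↔ y = inr c := by
  cases y <;> simp [embBC]

lemma adj_A {f : A ⊕ B → A ⊕ B} {g : B ⊕ C → B ⊕ C} (hf : f ∘ f = id)
    {a a' : A} (hfa : f (inl a) = inl a') :
    ∀ v, (matchGraph f g).Adj (inl a) v → v = (inl a' : A ⊕ B ⊕ C) := by
  intro v hv
  rw [matchGraph, SimpleGraph.fromRel_adj] at hv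
  obtain ⟨-, (⟨x, hx1, hx2⟩ | ⟨y, hy1, -⟩) | (⟨x, hx1, hx2⟩ | ⟨y, -, hy2⟩)⟩ := hv
  · obtain rfl : x = inl a := embAB_eq_inl.mp hx1.symm
    rw [hx2, hfa]; rfl
  · exact absurd hy1.symm embBC_ne_inl
  · have hx : f x = inl a := embAB_eq_inl.mp hx2.symm
    have : x = inl a' := by
      have := congrFun hf x
      simp only [Function.comp_apply, id_eq] at this
      rw [← this, hx, hfa]
    rw [hx1, this]; rfl
  · exact absurd hy2.symm embBC_ne_inl

lemma adj_C {f : A ⊕ B → A ⊕ B} {g : B ⊕ C → B ⊕ C} (hg : g ∘ g = id)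
    {c c' : C} (hgc : g (inr c) = inr c') :
    ∀ v, (matchGraph f g).Adj (inr (inr c)) v → v = (inr (inr c') : A ⊕ B ⊕ C) := by
  intro v hv
  rw [matchGraph, SimpleGraph.fromRel_adj] at hv
  obtain ⟨-, (⟨x, hx1, -⟩ | ⟨y, hy1, hy2⟩) | (⟨x, -, hx2⟩ | ⟨y, hy1, hy2⟩)⟩ := hv
  · exact absurd hx1.symm embAB_ne_inr_inr
  · obtain rfl : y = inr c := embBC_eq_inr_inr.mp hy1.symm
    rw [hy2, hgc]; rfl
  · exact absurd hx2.symm embAB_ne_inr_inr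
  · have hy : g y = inr c := embBC_eq_inr_inr.mp hy2.symm
    have : y = inr c' := by
      have := congrFun hg y
      simp only [Function.comp_apply, id_eq] at this
      rw [← this, hy, hgc]
    rw [hy1, this]; rfl

lemma m_left {f : A ⊕ B → A ⊕ B} {g : B ⊕ C → B ⊕ C} {m : A ⊕ C → A ⊕ C}
    (hf : f ∘ f = id) (hm : IsComposite f g m)
    {a a' : A} (hfa : f (inl a) = inl a') : m (inl a) = inl a' := by
  obtain ⟨hmm, hm', hreach⟩ := hm
  have hfa' : f (inl a') = inl a := by
    have := congrFun hf (inl a)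
    simp only [Function.comp_apply, id_eq] at this
    rw [← this, hfa]
  obtain ⟨p⟩ := hreach (inl a)
  have hkey := reach_pair (adj_A hf hfa) (adj_A hf hfa') p (Or.inl rfl)
  cases hma : m (inl a) with
  | inl a0 =>
    rw [hma] at hkey
    simp only [embAC] at hkey
    rcases hkey with h | h
    · exact absurd (hma.trans (by injection h with h; rw [h])) (hm' (inl a))
    · injection h with h; rw [h]
  | inr c =>
    rw [hma] at hkey
    simp [embAC] at hkey

lemma m_right {f : A ⊕ B → A ⊕ B} {g : B ⊕ C → B ⊕ C} {m : A ⊕ C → A ⊕ C}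
    (hg : g ∘ g = id) (hm : IsComposite f g m)
    {c c' : C} (hgc : g (inr c) = inr c') : m (inr c) = inr c' := by
  obtain ⟨hmm, hm', hreach⟩ := hm
  have hgc' : g (inr c') = inr c := by
    have := congrFun hg (inr c)
    simp only [Function.comp_apply, id_eq] at this
    rw [← this, hgc]
  obtain ⟨p⟩ := hreach (inr c)
  have hkey := reach_pair (adj_C hg hgc) (adj_C hg hgc') p (Or.inl rfl)
  cases hmc : m (inr c) with
  | inl a =>
    rw [hmc] at hkey
    simp [embAC] at hkey
  | inr c0 =>
    rw [hmc] at hkey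
    simp only [embAC] at hkey
    rcases hkey with h | h
    · have : c0 = c := by injection h with h; injection h
      exact absurd (hmc.trans (by rw [this])) (hm' (inr c))
    · have : c0 = c' := by injection h with h; injection h
      rw [this]

/-- The number of through strands of the composite `f * g` is at most the minimum of
the numbers of through strands of `f` and of `g`. -/
theorem stmt7 [Fintype A] [Fintype B] [Fintype C]
    (f : A ⊕ B → A ⊕ B) (hf : f ∘ f = id) (hf' : ∀ x, f x ≠ x)
    (g : B ⊕ C → B ⊕ C) (hg : g ∘ g = id) (hg' : ∀ y, g y ≠ y)
    (m : A ⊕ C → A ⊕ C) (hm : IsComposite f g m) :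
    (Finset.univ.filter fun a : A => (m (inl a)).isRight).card ≤
      min ((Finset.univ.filter fun a : A => (f (inl a)).isRight).card)
        ((Finset.univ.filter fun c : C => (g (inr c)).isLeft).card) := by
  have hminv : ∀ x, m (m x) = x := fun x => congrFun hm.1 x
  refine le_min ?_ ?_
  · apply Finset.card_le_card
    intro a ha
    simp only [Finset.mem_filter, Finset.mem_univ, true_and] at ha ⊢
    cases hfa : f (inl a) with
    | inl a' => rw [m_left hf hm hfa] at ha; simp at ha
    | inr b => rfl
  · have key : ∀ a (h : (m (inl a)).isRight),
        m (inr ((m (inl a)).getRight h)) = inl a := by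
      intro a h
      rw [Sum.inr_getRight, hminv]
    calc (Finset.univ.filter fun a : A => (m (inl a)).isRight).card
        = (Finset.univ.filter fun c : C => (m (inr c)).isLeft).card := by
          refine Finset.card_bij
            (fun a ha => (m (inl a)).getRight (by simpa using ha)) ?_ ?_ ?_
          · intro a ha
            simp only [Finset.mem_filter, Finset.mem_univ, true_and]
            rw [key]; rfl
          · intro a1 h1 a2 h2 h
            have := congrArg (fun c => m (inr c)) h
            rw [key, key] at this
            injection this
          · intro c hc
            simp only [Finset.mem_filter, Finset.mem_univ, true_and] at hc
            obtain ⟨a, ha⟩ := Sum.isLeft_iff.mp hc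
            have hma : m (inl a) = inr c := by rw [← ha, hminv]
            refine ⟨a, by simp [hma], ?_⟩
            apply Sum.inr_injective
            rw [Sum.inr_getRight, hma]
      _ ≤ (Finset.univ.filter fun c : C => (g (inr c)).isLeft).card := by
          apply Finset.card_le_card
          intro c hc
          simp only [Finset.mem_filter, Finset.mem_univ, true_and] at hc ⊢
          cases hgc : g (inr c) with
          | inl b => rfl
          | inr c' => rw [m_right hg hm hgc] at hc; simp at hc
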